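/- For all real numbers α with 0 ≤ α ≤ 1 and every constant C > 0 there exists a constant C' > 0 such that the following holds: for every finite simple graph G, if for every pair of ADJACENT vertices u, v of G and every pair of disjoint vertex sets U ⊆ N(u)\{v} and V ⊆ N(v)\{u} the number of edges of G with one endpoint in U and the other endpoint in V is at most C·(|U|+|V|)^{2−α}, then the number of edges of G is at most C'·|V(G)|^{2−α/(α+1)}. -/

import Mathlib

set_option linter.unusedSectionVars false
open Finset

section helpers
variable {β γ : Type*} [Fintype β] [Fintype γ] [DecidableEq β] [DecidableEq γ]

private lemma card_filter_fst (q : β → γ → Prop) [∀ x y, Decidable (q x y)] :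
    (univ.filter fun p : β × γ => q p.1 p.2).card
      = ∑ x : β, (univ.filter fun y => q x y).card := by
  rw [Finset.card_eq_sum_card_fiberwise (f := Prod.fst) (t := univ) (fun p _ => mem_univ _)]
  refine Finset.sum_congr rfl fun x _ => ?_
  refine Finset.card_bij (fun p _ => p.2) ?_ ?_ ?_
  · rintro ⟨a, b⟩ hp
    simp only [mem_filter, mem_univ, true_and] at hp ⊢
    obtain ⟨h1, h2⟩ := hp
    subst h2; exact h1
  · rintro ⟨a, b⟩ ha ⟨c, d⟩ hc h
    simp only [mem_filter] at ha hc
    obtain ⟨-, h1⟩ := ha; obtain ⟨-, h2⟩ := hc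
    simp only at h1 h2 h
    subst h1; subst h2; subst h; rfl
  · intro b hb
    simp only [mem_filter, mem_univ, true_and] at hb
    exact ⟨(x, b), by simp [hb], rfl⟩

private lemma card_filter_snd (q : β → γ → Prop) [∀ x y, Decidable (q x y)] :
    (univ.filter fun p : β × γ => q p.1 p.2).card
      = ∑ y : γ, (univ.filter fun x => q x y).card := by
  rw [Finset.card_eq_sum_card_fiberwise (f := Prod.snd) (t := univ) (fun p _ => mem_univ _)]
  refine Finset.sum_congr rfl fun y _ => ?_
  refine Finset.card_bij (fun p _ => p.1) ?_ ?_ ?_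
  · rintro ⟨a, b⟩ hp
    simp only [mem_filter, mem_univ, true_and] at hp ⊢
    obtain ⟨h1, h2⟩ := hp
    subst h2; exact h1
  · rintro ⟨a, b⟩ ha ⟨c, d⟩ hc h
    simp only [mem_filter] at ha hc
    obtain ⟨-, h1⟩ := ha; obtain ⟨-, h2⟩ := hc
    simp only at h1 h2 h
    subst h1; subst h2; subst h; rfl
  · intro a ha
    simp only [mem_filter, mem_univ, true_and] at ha
    exact ⟨(a, y), by simp [ha], rfl⟩

private lemma card_filter_prod (A : β → Prop) (B : γ → Prop)
    [DecidablePred A] [DecidablePred B] :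
    (univ.filter fun p : β × γ => A p.1 ∧ B p.2).card
      = (univ.filter A).card * (univ.filter B).card := by
  rw [← Finset.card_product]
  congr 1
  ext ⟨a, b⟩
  simp [Finset.mem_product]

end helpers


/-- The number of edges of `G` with one endpoint in `U` and the other endpoint in `W`
(counted via ordered pairs; for disjoint `U`, `W` each such edge is counted once). -/
noncomputable def edgesBetween {V : Type*} (G : SimpleGraph V) (U W : Set V) : ℕ :=
  {p : V × V | p.1 ∈ U ∧ p.2 ∈ W ∧ G.Adj p.1 p.2}.ncard

section dc
variable {V : Type} [Fintype V] [DecidableEq V] (G : SimpleGraph V) [DecidableRel G.Adj]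

private def Dc (A B : Finset V) : ℕ :=
  ((A ×ˢ B).filter fun p => G.Adj p.1 p.2).card

private lemma edgesBetween_coe (A B : Finset V) :
    edgesBetween G (A : Set V) (B : Set V) = Dc G A B := by
  rw [edgesBetween, Dc, ← Set.ncard_coe_finset]
  congr 1
  ext ⟨a, b⟩
  simp [Finset.mem_product, and_assoc]

private lemma Dc_mono {A A' B B' : Finset V} (hA : A ⊆ A') (hB : B ⊆ B') :
    Dc G A B ≤ Dc G A' B' :=
  Finset.card_le_card (Finset.filter_subset_filter _ (Finset.product_subset_product hA hB))

private lemma Dc_union_left {A A' : Finset V} (B : Finset V) (h : Disjoint A A') :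
    Dc G (A ∪ A') B = Dc G A B + Dc G A' B := by
  rw [Dc, Finset.union_product, Finset.filter_union]
  rw [Finset.card_union_of_disjoint (Finset.disjoint_filter_filter
    (Finset.disjoint_product.mpr (Or.inl h))), Dc, Dc]

private lemma Dc_union_right (A : Finset V) {B B' : Finset V} (h : Disjoint B B') :
    Dc G A (B ∪ B') = Dc G A B + Dc G A B' := by
  rw [Dc, Finset.product_union, Finset.filter_union,
    Finset.card_union_of_disjoint (Finset.disjoint_filter_filter
    (Finset.disjoint_product.mpr (Or.inr h))), Dc, Dc]

private lemma Dc_insert_left {a : V} {A : Finset V} (B : Finset V) (ha : a ∉ A) :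
    Dc G (insert a A) B = Dc G A B + (B.filter (G.Adj a)).card := by
  rw [Finset.insert_eq, Dc_union_left G B (by simpa using ha), add_comm]
  congr 1
  rw [Dc]
  refine Finset.card_bij (fun p _ => p.2) ?_ ?_ ?_
  · rintro ⟨x, b⟩ hp
    simp only [Finset.mem_filter, Finset.mem_product, Finset.mem_singleton] at hp
    obtain ⟨⟨hx, hb⟩, hadj⟩ := hp
    subst hx
    simp [hb, hadj]
  · rintro ⟨x, b⟩ hx ⟨y, c⟩ hy hbc
    simp only [Finset.mem_filter, Finset.mem_product, Finset.mem_singleton] at hx hy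
    simp only at hbc
    obtain ⟨⟨h1, -⟩, -⟩ := hx; obtain ⟨⟨h2, -⟩, -⟩ := hy
    subst h1; subst h2; subst hbc; rfl
  · intro b hb
    simp only [Finset.mem_filter] at hb
    exact ⟨(a, b), by simp [hb.1, hb.2], rfl⟩

private lemma Dc_insert_right (A : Finset V) {a : V} {B : Finset V} (ha : a ∉ B) :
    Dc G A (insert a B) = Dc G A B + (A.filter (G.Adj a)).card := by
  rw [Finset.insert_eq, Dc_union_right G A (B := {a}) (B' := B) (by simpa using ha), add_comm,
    add_left_cancel_iff.mpr rfl]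
  congr 1
  rw [Dc]
  refine Finset.card_bij (fun p _ => p.1) ?_ ?_ ?_
  · rintro ⟨x, b⟩ hp
    simp only [Finset.mem_filter, Finset.mem_product, Finset.mem_singleton] at hp
    obtain ⟨⟨hx, hb⟩, hadj⟩ := hp
    subst hb
    simp only [Finset.mem_filter]
    exact ⟨hx, hadj.symm⟩
  · rintro ⟨x, b⟩ hx ⟨y, c⟩ hy hbc
    simp only [Finset.mem_filter, Finset.mem_product, Finset.mem_singleton] at hx hy
    simp only at hbc
    obtain ⟨⟨-, h1⟩, -⟩ := hx; obtain ⟨⟨-, h2⟩, -⟩ := hy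
    subst h1; subst h2; subst hbc; rfl
  · intro x hx
    simp only [Finset.mem_filter] at hx
    exact ⟨(x, a), by simp [hx.1, hx.2.symm], rfl⟩

/-- Max-cut: any finite vertex set can be split into two parts with at least half the
(ordered) adjacent pairs crossing. -/
private lemma maxcut (S : Finset V) :
    ∃ A B : Finset V, A ∪ B = S ∧ Disjoint A B ∧
      Dc G A A + Dc G B B ≤ Dc G A B + Dc G B A := by
  classical
  induction S using Finset.induction_on with
  | empty => exact ⟨∅, ∅, by simp, by simp, le_refl _⟩
  | @insert a S haS ih =>
    obtain ⟨A, B, hAB, hdisj, hle⟩ := ih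
    have haA : a ∉ A := fun h => haS (hAB ▸ Finset.mem_union_left _ h)
    have haB : a ∉ B := fun h => haS (hAB ▸ Finset.mem_union_right _ h)
    have key : ∀ X Y : Finset V, a ∉ X → a ∉ Y → Disjoint X Y →
        (Y.filter (G.Adj a)).card ≤ (X.filter (G.Adj a)).card →
        Dc G (insert a Y) (insert a Y) + Dc G X X
          ≤ Dc G (insert a Y) X + Dc G X (insert a Y)
          + (Dc G Y Y + Dc G X X) - (Dc G Y X + Dc G X Y) := by
      intro X Y haX haY hd hcard
      have h1 : Dc G (insert a Y) (insert a Y)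
          = Dc G Y Y + 2 * (Y.filter (G.Adj a)).card := by
        rw [Dc_insert_left G _ haY, Dc_insert_right G _ haY]
        have : (insert a Y).filter (G.Adj a) = Y.filter (G.Adj a) := by
          rw [Finset.filter_insert, if_neg (G.irrefl)]
        rw [this]; ring
      have h2 : Dc G (insert a Y) X = Dc G Y X + (X.filter (G.Adj a)).card :=
        Dc_insert_left G _ haY
      have h3 : Dc G X (insert a Y) = Dc G X Y + (X.filter (G.Adj a)).card :=
        Dc_insert_right G _ haY
      omega
    by_cases hside : (A.filter (G.Adj a)).card ≤ (B.filter (G.Adj a)).card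
    · refine ⟨insert a A, B, ?_, ?_, ?_⟩
      · rw [Finset.insert_union, hAB]
      · exact Finset.disjoint_insert_left.mpr ⟨haB, hdisj⟩
      · have := key B A haB haA hdisj.symm hside
        omega
    · refine ⟨A, insert a B, ?_, ?_, ?_⟩
      · rw [Finset.union_insert, hAB]
      · exact Finset.disjoint_insert_right.mpr ⟨haA, hdisj⟩
      · have := key A B haA haB hdisj (le_of_not_ge hside)
        omega

private lemma claimB {α C : ℝ} (h2a : 1 ≤ 2 - α) (hC : 0 < C)
    (hyp : ∀ u v : V, G.Adj u v → ∀ U W : Set V,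
        U ⊆ G.neighborSet u \ {v} → W ⊆ G.neighborSet v \ {u} → Disjoint U W →
        (edgesBetween G U W : ℝ) ≤ C * ((U.ncard + W.ncard : ℕ) : ℝ) ^ (2 - α))
    (x y : V) (hxy : G.Adj x y) :
    (Dc G (G.neighborFinset x \ {y}) (G.neighborFinset y \ {x}) : ℝ)
      ≤ 6 * C * ((G.degree x + G.degree y : ℕ) : ℝ) ^ (2 - α) := by
  set A : Finset V := G.neighborFinset x \ {y} with hA
  set B : Finset V := G.neighborFinset y \ {x} with hB
  set S : Finset V := A ∩ B with hS
  set R : ℝ := ((G.degree x + G.degree y : ℕ) : ℝ) ^ (2 - α) with hR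
  have hAcard : A.card ≤ G.degree x := by
    rw [← G.card_neighborFinset_eq_degree]
    exact Finset.card_le_card (Finset.sdiff_subset)
  have hBcard : B.card ≤ G.degree y := by
    rw [← G.card_neighborFinset_eq_degree]
    exact Finset.card_le_card (Finset.sdiff_subset)
  have hypF : ∀ U W : Finset V, U ⊆ A → W ⊆ B → Disjoint U W →
      (Dc G U W : ℝ) ≤ C * R := by
    intro U W hU hW hUW
    have hUc : (U : Set V) ⊆ G.neighborSet x \ {y} := by
      refine subset_trans (Finset.coe_subset.mpr hU) ?_
      rw [hA, Finset.coe_sdiff, Finset.coe_singleton]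
      rw [SimpleGraph.neighborFinset_def, Set.coe_toFinset]
    have hWc : (W : Set V) ⊆ G.neighborSet y \ {x} := by
      refine subset_trans (Finset.coe_subset.mpr hW) ?_
      rw [hB, Finset.coe_sdiff, Finset.coe_singleton]
      rw [SimpleGraph.neighborFinset_def, Set.coe_toFinset]
    have := hyp x y hxy (U : Set V) (W : Set V) hUc hWc
      (Finset.disjoint_coe.mpr hUW)
    rw [edgesBetween_coe] at this
    refine this.trans ?_
    have hcard : (U : Set V).ncard + (W : Set V).ncard ≤ G.degree x + G.degree y := by
      rw [Set.ncard_coe_finset, Set.ncard_coe_finset]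
      exact add_le_add ((Finset.card_le_card hU).trans hAcard)
        ((Finset.card_le_card hW).trans hBcard)
    have : (((U : Set V).ncard + (W : Set V).ncard : ℕ) : ℝ)
        ≤ ((G.degree x + G.degree y : ℕ) : ℝ) := by exact_mod_cast hcard
    exact mul_le_mul_of_nonneg_left
      (Real.rpow_le_rpow (by positivity) this (by linarith)) hC.le
  -- decompose Dc A B
  have hSA : S ⊆ A := Finset.inter_subset_left
  have hSB : S ⊆ B := Finset.inter_subset_right
  have hd1 : Disjoint (A \ S) S := Finset.sdiff_disjoint
  have dec1 : Dc G A B = Dc G (A \ S) B + Dc G S B := by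
    conv_lhs => rw [← Finset.sdiff_union_of_subset hSA]
    exact Dc_union_left G B hd1
  have dec2 : Dc G S B = Dc G S (B \ S) + Dc G S S := by
    conv_lhs => rw [← Finset.sdiff_union_of_subset hSB]
    exact Dc_union_right G S Finset.sdiff_disjoint
  obtain ⟨A', B', hunion, hdisj, hcut⟩ := maxcut G S
  have hA'S : A' ⊆ S := hunion ▸ Finset.subset_union_left
  have hB'S : B' ⊆ S := hunion ▸ Finset.subset_union_right
  have dec3 : Dc G S S = Dc G A' A' + Dc G A' B' + (Dc G B' A' + Dc G B' B') := by
    conv_lhs => rw [← hunion]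
    rw [Dc_union_left G _ hdisj, Dc_union_right G _ hdisj, Dc_union_right G _ hdisj]
  have hSS : (Dc G S S : ℕ) ≤ 2 * (Dc G A' B' + Dc G B' A') := by omega
  -- the four hypF applications
  have b1 : (Dc G (A \ S) B : ℝ) ≤ C * R :=
    hypF _ _ Finset.sdiff_subset Finset.Subset.rfl
      (Finset.disjoint_left.mpr fun {w} hw hwB =>
        (Finset.mem_sdiff.mp hw).2 (Finset.mem_inter.mpr ⟨(Finset.mem_sdiff.mp hw).1, hwB⟩))
  have b2 : (Dc G S (B \ S) : ℝ) ≤ C * R :=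
    hypF _ _ hSA (Finset.sdiff_subset) Finset.disjoint_sdiff
  have b3 : (Dc G A' B' : ℝ) ≤ C * R := hypF _ _ (hA'S.trans hSA) (hB'S.trans hSB) hdisj
  have b4 : (Dc G B' A' : ℝ) ≤ C * R := hypF _ _ (hB'S.trans hSA) (hA'S.trans hSB) hdisj.symm
  have hcast : (Dc G A B : ℝ) ≤ (Dc G (A \ S) B : ℝ) + (Dc G S (B \ S) : ℝ)
      + 2 * ((Dc G A' B' : ℝ) + (Dc G B' A' : ℝ)) := by
    have : (Dc G A B : ℕ) ≤ Dc G (A \ S) B + Dc G S (B \ S)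
        + 2 * (Dc G A' B' + Dc G B' A') := by omega
    exact_mod_cast this
  calc (Dc G A B : ℝ) ≤ _ := hcast
    _ ≤ C * R + C * R + 2 * (C * R + C * R) := by
        refine add_le_add (add_le_add b1 b2) ?_
        have := add_le_add b3 b4
        linarith
    _ = 6 * C * R := by ring

-- ## Dyadic-class counting machinery
variable (D : ℕ)

private def AdjD (x y : V) : Prop :=
  G.Adj x y ∧ D ≤ max (G.degree x) (G.degree y) ∧ max (G.degree x) (G.degree y) < 2 * D

private instance : ∀ x y : V, Decidable (AdjD G D x y) := fun x y => by
  unfold AdjD; infer_instance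

private lemma adjD_symm {x y : V} (h : AdjD G D x y) : AdjD G D y x := by
  obtain ⟨h1, h2, h3⟩ := h
  exact ⟨h1.symm, by rwa [max_comm], by rwa [max_comm]⟩

private lemma adjD_deg_lt {x y : V} (h : AdjD G D x y) : G.degree x < 2 * D :=
  lt_of_le_of_lt (le_max_left _ _) h.2.2

private def Vcl : Finset V := univ.filter fun v => D ≤ G.degree v ∧ G.degree v < 2 * D

private def Fp : Finset (V × V) := univ.filter fun p => AdjD G D p.1 p.2

private def tD (x : V) : ℕ := (univ.filter fun y => AdjD G D x y ∧ y ∈ Vcl G D).card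

private def sD (y : V) : ℕ := (univ.filter fun x => AdjD G D x y).card

private def s'D (y : V) : ℕ := (univ.filter fun x => AdjD G D x y ∧ y ∈ Vcl G D).card

private def cdD (y y' : V) : ℕ := (univ.filter fun x => AdjD G D x y ∧ AdjD G D x y').card

private lemma tD_le_degree (x : V) : tD G D x ≤ G.degree x := by
  rw [← G.card_neighborFinset_eq_degree]
  refine Finset.card_le_card fun y hy => ?_
  simp only [tD, Finset.mem_filter] at hy
  exact (SimpleGraph.mem_neighborFinset G x y).mpr hy.2.1.1

private lemma sD_le_degree (y : V) : sD G D y ≤ G.degree y := by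
  rw [← G.card_neighborFinset_eq_degree]
  refine Finset.card_le_card fun x hx => ?_
  simp only [sD, Finset.mem_filter] at hx
  exact (SimpleGraph.mem_neighborFinset G y x).mpr hx.2.1.symm

private lemma sum_tD_eq : ∑ x : V, tD G D x
    = ((Fp G D).filter fun p => p.2 ∈ Vcl G D).card := by
  rw [Fp, Finset.filter_filter,
    card_filter_fst (fun x y => AdjD G D x y ∧ y ∈ Vcl G D)]
  rfl

private lemma sum_tD_le : ∑ x : V, tD G D x ≤ (Fp G D).card := by
  rw [sum_tD_eq]
  exact Finset.card_le_card (Finset.filter_subset _ _)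

private lemma fD_le_two_sum_tD : (Fp G D).card ≤ 2 * ∑ x : V, tD G D x := by
  rw [sum_tD_eq]
  have hsplit := Finset.card_filter_add_card_filter_not
    (s := Fp G D) (p := fun p => p.2 ∈ Vcl G D)
  have hinj : ((Fp G D).filter fun p => ¬ p.2 ∈ Vcl G D).card
      ≤ ((Fp G D).filter fun p => p.2 ∈ Vcl G D).card := by
    refine Finset.card_le_card_of_injOn Prod.swap ?_ ?_
    · rintro ⟨x, y⟩ hp
      simp only [Finset.mem_coe, Fp, Finset.mem_filter, Finset.mem_univ, true_and, Prod.swap_prod_mk] at hp ⊢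
      obtain ⟨⟨ha1, ha2, ha3⟩, hy⟩ := hp
      have hylt : G.degree y < 2 * D := lt_of_le_of_lt (le_max_right _ _) ha3
      have hxlt : G.degree x < 2 * D := lt_of_le_of_lt (le_max_left _ _) ha3
      have hyD : G.degree y < D := by
        by_contra hcon
        exact hy (by simp [Vcl, le_of_not_gt hcon, hylt])
      have hxD : D ≤ G.degree x := by
        rcases max_choice (G.degree x) (G.degree y) with h | h <;> rw [h] at ha2 <;> omega
      refine ⟨⟨ha1.symm, by rwa [max_comm], by rwa [max_comm]⟩, ?_⟩
      simp [Vcl, hxD, hxlt]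
    · rintro ⟨a, b⟩ - ⟨c, d⟩ - h
      simpa [Prod.ext_iff, and_comm] using (Prod.ext_iff.mp h)
  omega

private def BigT : Finset (V × (V × V)) :=
  univ.filter fun z => (AdjD G D z.1 z.2.1 ∧ z.2.1 ∈ Vcl G D)
    ∧ (AdjD G D z.1 z.2.2 ∧ z.2.2 ∈ Vcl G D)

private lemma bigT_card_fst : (BigT G D).card = ∑ x : V, (tD G D x) ^ 2 := by
  rw [BigT, card_filter_fst (fun x (q : V × V) =>
    (AdjD G D x q.1 ∧ q.1 ∈ Vcl G D) ∧ (AdjD G D x q.2 ∧ q.2 ∈ Vcl G D))]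
  refine Finset.sum_congr rfl fun x _ => ?_
  rw [card_filter_prod (fun y => AdjD G D x y ∧ y ∈ Vcl G D)
    (fun y => AdjD G D x y ∧ y ∈ Vcl G D), sq]
  rfl

private lemma bigT_card_snd :
    (BigT G D).card = ∑ q ∈ (Vcl G D) ×ˢ (Vcl G D), cdD G D q.1 q.2 := by
  rw [BigT, card_filter_snd (fun x (q : V × V) =>
    (AdjD G D x q.1 ∧ q.1 ∈ Vcl G D) ∧ (AdjD G D x q.2 ∧ q.2 ∈ Vcl G D))]
  rw [← Finset.sum_subset (Finset.subset_univ ((Vcl G D) ×ˢ (Vcl G D))) ?_]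
  · refine Finset.sum_congr rfl fun q hq => ?_
    rw [Finset.mem_product] at hq
    rw [cdD]
    congr 1
    refine Finset.filter_congr fun x _ => ?_
    simp [hq.1, hq.2]
  · intro q _ hq
    rw [Finset.card_eq_zero, Finset.filter_eq_empty_iff]
    intro x _ hcon
    exact hq (Finset.mem_product.mpr ⟨hcon.1.2, hcon.2.2⟩)

private def BigQ : Finset ((V × V) × (V × V)) :=
  univ.filter fun z => (z.1.1 ∈ Vcl G D ∧ z.1.2 ∈ Vcl G D) ∧
    ((AdjD G D z.2.1 z.1.1 ∧ AdjD G D z.2.1 z.1.2)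
      ∧ (AdjD G D z.2.2 z.1.1 ∧ AdjD G D z.2.2 z.1.2))

private lemma bigQ_card :
    (BigQ G D).card = ∑ q ∈ (Vcl G D) ×ˢ (Vcl G D), (cdD G D q.1 q.2) ^ 2 := by
  rw [BigQ, card_filter_fst (fun (q : V × V) (w : V × V) =>
    (q.1 ∈ Vcl G D ∧ q.2 ∈ Vcl G D) ∧
    ((AdjD G D w.1 q.1 ∧ AdjD G D w.1 q.2) ∧ (AdjD G D w.2 q.1 ∧ AdjD G D w.2 q.2)))]
  rw [← Finset.sum_subset (Finset.subset_univ ((Vcl G D) ×ˢ (Vcl G D))) ?_]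
  · refine Finset.sum_congr rfl fun q hq => ?_
    rw [Finset.mem_product] at hq
    have heq : (univ.filter fun w : V × V =>
        (q.1 ∈ Vcl G D ∧ q.2 ∈ Vcl G D) ∧
        ((AdjD G D w.1 q.1 ∧ AdjD G D w.1 q.2) ∧ (AdjD G D w.2 q.1 ∧ AdjD G D w.2 q.2)))
        = univ.filter fun w : V × V =>
        (AdjD G D w.1 q.1 ∧ AdjD G D w.1 q.2) ∧ (AdjD G D w.2 q.1 ∧ AdjD G D w.2 q.2) := by
      refine Finset.filter_congr fun w _ => ?_
      simp [hq.1, hq.2]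
    rw [heq, card_filter_prod (fun x => AdjD G D x q.1 ∧ AdjD G D x q.2)
      (fun x => AdjD G D x q.1 ∧ AdjD G D x q.2), sq]
    rfl
  · intro q _ hq
    rw [Finset.card_eq_zero, Finset.filter_eq_empty_iff]
    intro x _ hcon
    exact hq (Finset.mem_product.mpr ⟨hcon.1.1, hcon.1.2⟩)

private lemma sum_s'D_eq : ∑ y : V, s'D G D y
    = ((Fp G D).filter fun p => p.2 ∈ Vcl G D).card := by
  rw [Fp, Finset.filter_filter,
    card_filter_snd (fun x y => AdjD G D x y ∧ y ∈ Vcl G D)]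
  rfl

private lemma sdiag_card_le :
    ((BigQ G D).filter fun z => z.1.1 = z.1.2).card ≤ 2 * D * (Fp G D).card := by
  set T2 : Finset (V × (V × V)) := univ.filter fun w : V × (V × V) =>
    w.1 ∈ Vcl G D ∧ (AdjD G D w.2.1 w.1 ∧ AdjD G D w.2.2 w.1) with hT2
  have step1 : ((BigQ G D).filter fun z => z.1.1 = z.1.2).card ≤ T2.card := by
    refine Finset.card_le_card_of_injOn (fun z => (z.1.1, z.2)) ?_ ?_
    · rintro ⟨⟨y, y'⟩, ⟨x, x'⟩⟩ hz
      simp only [Finset.mem_coe, BigQ, Finset.mem_filter, Finset.mem_univ, true_and] at hz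
      obtain ⟨⟨⟨h1, h2⟩, ⟨⟨h3, h4⟩, ⟨h5, h6⟩⟩⟩, heq⟩ := hz
      subst heq
      simp only [Finset.mem_coe, hT2, Finset.mem_filter, Finset.mem_univ, true_and]
      exact ⟨h1, h3, h5⟩
    · rintro ⟨⟨y, y'⟩, ⟨x, x'⟩⟩ hz ⟨⟨z, z'⟩, ⟨w, w'⟩⟩ hw h
      simp only [Finset.mem_coe, Finset.mem_filter] at hz hw
      obtain ⟨-, e1⟩ := hz; obtain ⟨-, e2⟩ := hw
      simp only [Prod.mk.injEq, Prod.ext_iff] at h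
      simp_all
  refine step1.trans ?_
  have hT2card : T2.card = ∑ y : V, (univ.filter fun w : V × V =>
      y ∈ Vcl G D ∧ (AdjD G D w.1 y ∧ AdjD G D w.2 y)).card := by
    rw [hT2, card_filter_fst (fun y (w : V × V) =>
      y ∈ Vcl G D ∧ (AdjD G D w.1 y ∧ AdjD G D w.2 y))]
  rw [hT2card]
  have hpery : ∀ y : V, (univ.filter fun w : V × V =>
      y ∈ Vcl G D ∧ (AdjD G D w.1 y ∧ AdjD G D w.2 y)).card ≤ 2 * D * s'D G D y := by
    intro y
    by_cases hy : y ∈ Vcl G D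
    · have h1 : (univ.filter fun w : V × V =>
          y ∈ Vcl G D ∧ (AdjD G D w.1 y ∧ AdjD G D w.2 y))
          = univ.filter fun w : V × V => AdjD G D w.1 y ∧ AdjD G D w.2 y := by
        refine Finset.filter_congr fun w _ => ?_
        simp [hy]
      rw [h1, card_filter_prod (fun x => AdjD G D x y) (fun x => AdjD G D x y)]
      have h2 : s'D G D y = sD G D y := by
        rw [s'D, sD]
        congr 1
        refine Finset.filter_congr fun x _ => ?_
        simp [hy]
      have h3 : sD G D y ≤ 2 * D := by
        refine (sD_le_degree G D y).trans ?_
        simp only [Vcl, Finset.mem_filter] at hy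
        omega
      rw [h2]
      exact Nat.mul_le_mul_right _ h3
    · have h1 : (univ.filter fun w : V × V =>
          y ∈ Vcl G D ∧ (AdjD G D w.1 y ∧ AdjD G D w.2 y)) = ∅ := by
        rw [Finset.filter_eq_empty_iff]
        intro w _ hcon
        exact hy hcon.1
      rw [h1]
      simp
  calc ∑ y : V, (univ.filter fun w : V × V =>
      y ∈ Vcl G D ∧ (AdjD G D w.1 y ∧ AdjD G D w.2 y)).card
      ≤ ∑ y : V, 2 * D * s'D G D y := Finset.sum_le_sum fun y _ => hpery y
    _ = 2 * D * ∑ y : V, s'D G D y := by rw [Finset.mul_sum]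
    _ ≤ 2 * D * (Fp G D).card := by
        refine Nat.mul_le_mul_left _ ?_
        rw [sum_s'D_eq]
        exact Finset.card_le_card (Finset.filter_subset _ _)

private lemma bigT_card_le : (BigT G D).card ≤ 2 * D * (Fp G D).card := by
  rw [bigT_card_fst]
  have hperx : ∀ x : V, (tD G D x) ^ 2 ≤ 2 * D * tD G D x := by
    intro x
    by_cases h : tD G D x = 0
    · simp [h]
    · obtain ⟨y, hy⟩ := Finset.card_pos.mp (Nat.pos_of_ne_zero h)
      simp only [tD, Finset.mem_filter] at hy
      have hdeg : G.degree x < 2 * D := adjD_deg_lt G D hy.2.1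
      have htd : tD G D x ≤ 2 * D := (tD_le_degree G D x).trans hdeg.le
      calc (tD G D x) ^ 2 = tD G D x * tD G D x := by rw [sq]
        _ ≤ 2 * D * tD G D x := Nat.mul_le_mul_right _ htd
  calc ∑ x : V, (tD G D x) ^ 2 ≤ ∑ x : V, 2 * D * tD G D x :=
        Finset.sum_le_sum fun x _ => hperx x
    _ = 2 * D * ∑ x : V, tD G D x := by rw [Finset.mul_sum]
    _ ≤ 2 * D * (Fp G D).card := Nat.mul_le_mul_left _ (sum_tD_le G D)

private lemma xdiag_card_le :
    ((BigQ G D).filter fun z => z.2.1 = z.2.2).card ≤ (BigT G D).card := by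
  refine Finset.card_le_card_of_injOn (fun z => (z.2.1, z.1)) ?_ ?_
  · rintro ⟨⟨y, y'⟩, ⟨x, x'⟩⟩ hz
    simp only [Finset.mem_coe, BigQ, Finset.mem_filter, Finset.mem_univ, true_and] at hz
    obtain ⟨⟨⟨h1, h2⟩, ⟨⟨h3, h4⟩, ⟨h5, h6⟩⟩⟩, heq⟩ := hz
    subst heq
    simp only [Finset.mem_coe, BigT, Finset.mem_filter, Finset.mem_univ, true_and]
    exact ⟨⟨h3, h1⟩, ⟨h4, h2⟩⟩
  · rintro ⟨⟨y, y'⟩, ⟨x, x'⟩⟩ hz ⟨⟨z, z'⟩, ⟨w, w'⟩⟩ hw h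
    simp only [Finset.mem_coe, Finset.mem_filter] at hz hw
    obtain ⟨-, e1⟩ := hz; obtain ⟨-, e2⟩ := hw
    simp only [Prod.mk.injEq, Prod.ext_iff] at h
    simp_all

private lemma bigQ_cover : (BigQ G D).card
    ≤ ((BigQ G D).filter fun z => z.1.1 ≠ z.1.2 ∧ z.2.1 ≠ z.2.2).card
      + (((BigQ G D).filter fun z => z.1.1 = z.1.2).card
        + ((BigQ G D).filter fun z => z.2.1 = z.2.2).card) := by
  have hsub : BigQ G D ⊆ ((BigQ G D).filter fun z => z.1.1 ≠ z.1.2 ∧ z.2.1 ≠ z.2.2)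
      ∪ (((BigQ G D).filter fun z => z.1.1 = z.1.2)
        ∪ ((BigQ G D).filter fun z => z.2.1 = z.2.2)) := by
    intro z hz
    by_cases h1 : z.1.1 = z.1.2
    · exact Finset.mem_union_right _ (Finset.mem_union_left _ (Finset.mem_filter.mpr ⟨hz, h1⟩))
    · by_cases h2 : z.2.1 = z.2.2
      · exact Finset.mem_union_right _
          (Finset.mem_union_right _ (Finset.mem_filter.mpr ⟨hz, h2⟩))
      · exact Finset.mem_union_left _ (Finset.mem_filter.mpr ⟨hz, h1, h2⟩)
  calc (BigQ G D).card ≤ _ := Finset.card_le_card hsub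
    _ ≤ _ := (Finset.card_union_le _ _).trans
        (Nat.add_le_add_left (Finset.card_union_le _ _) _)

private def cFour (x y : V) : ℕ :=
  Dc G (G.neighborFinset x \ {y}) (G.neighborFinset y \ {x})

private lemma ndist_card_le :
    ((BigQ G D).filter fun z => z.1.1 ≠ z.1.2 ∧ z.2.1 ≠ z.2.2).card
      ≤ ∑ p ∈ Fp G D, cFour G p.1 p.2 := by
  rw [Finset.card_eq_sum_card_fiberwise (f := fun z => (z.2.1, z.1.1)) (t := Fp G D) ?_]
  · refine Finset.sum_le_sum fun p hp => ?_
    rw [cFour, Dc]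
    refine Finset.card_le_card_of_injOn (fun z => (z.1.2, z.2.2)) ?_ ?_
    · rintro ⟨⟨y, y'⟩, ⟨x, x'⟩⟩ hz
      simp only [Finset.mem_coe, Finset.mem_filter] at hz
      obtain ⟨⟨hzQ, hne⟩, heq⟩ := hz
      obtain ⟨hne1, hne2⟩ := hne
      simp only [BigQ, Finset.mem_filter, Finset.mem_univ, true_and] at hzQ
      obtain ⟨⟨h1, h2⟩, ⟨⟨h3, h4⟩, ⟨h5, h6⟩⟩⟩ := hzQ
      have hp1 : p.1 = x := by rw [← heq]
      have hp2 : p.2 = y := by rw [← heq]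
      subst hp1; subst hp2
      simp only [Finset.mem_coe, Finset.mem_filter, Finset.mem_product, Finset.mem_sdiff,
        Finset.mem_singleton, SimpleGraph.mem_neighborFinset]
      exact ⟨⟨⟨h4.1, fun hc => hne1 hc.symm⟩, ⟨h5.1.symm, fun hc => hne2 hc.symm⟩⟩,
        h6.1.symm⟩
    · rintro ⟨⟨y, y'⟩, ⟨x, x'⟩⟩ hz ⟨⟨z, z'⟩, ⟨w, w'⟩⟩ hw h
      simp only [Finset.mem_coe, Finset.mem_filter] at hz hw
      obtain ⟨-, e1⟩ := hz; obtain ⟨-, e2⟩ := hw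
      have e3 := e1.trans e2.symm
      simp only [Prod.mk.injEq] at e3 h
      simp_all
  · rintro ⟨⟨y, y'⟩, ⟨x, x'⟩⟩ hz
    simp only [Finset.mem_coe, Finset.mem_filter] at hz
    obtain ⟨hzQ, -⟩ := hz
    simp only [BigQ, Finset.mem_filter, Finset.mem_univ, true_and] at hzQ
    simp only [Finset.mem_coe, Fp, Finset.mem_filter, Finset.mem_univ, true_and]
    exact hzQ.2.1.1

private lemma vcl_card_le : D * (Vcl G D).card ≤ 2 * G.edgeFinset.card := by
  have h1 : ∑ v ∈ Vcl G D, D ≤ ∑ v ∈ Vcl G D, G.degree v := by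
    refine Finset.sum_le_sum fun v hv => ?_
    simp only [Vcl, Finset.mem_filter] at hv
    exact hv.2.1
  have h2 : ∑ v ∈ Vcl G D, G.degree v ≤ ∑ v : V, G.degree v :=
    Finset.sum_le_sum_of_subset (Finset.subset_univ _)
  have h3 := G.sum_degrees_eq_twice_card_edges
  simp only [Finset.sum_const, smul_eq_mul] at h1
  rw [mul_comm]
  omega

private lemma fD_triv : (Fp G D).card ≤ 2 * ((Vcl G D).card * (2 * D)) := by
  have h1 := fD_le_two_sum_tD G D
  have h2 : ∑ x : V, tD G D x = ∑ y : V, s'D G D y := by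
    rw [sum_tD_eq, sum_s'D_eq]
  have h3 : ∑ y : V, s'D G D y ≤ (Vcl G D).card * (2 * D) := by
    rw [← Finset.sum_subset (Finset.subset_univ (Vcl G D)) ?_]
    · calc ∑ y ∈ Vcl G D, s'D G D y ≤ ∑ y ∈ Vcl G D, 2 * D := by
            refine Finset.sum_le_sum fun y hy => ?_
            have hss : s'D G D y ≤ sD G D y :=
              Finset.card_le_card (Finset.monotone_filter_right _
                (fun x _ hx => hx.1))
            refine hss.trans ((sD_le_degree G D y).trans ?_)
            simp only [Vcl, Finset.mem_filter] at hy
            omega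
        _ = (Vcl G D).card * (2 * D) := by rw [Finset.sum_const, smul_eq_mul]
    · intro y _ hy
      rw [s'D, Finset.card_eq_zero, Finset.filter_eq_empty_iff]
      intro x _ hcon
      exact hy hcon.2
  omega

private lemma fD_triv' : (Fp G D).card ≤ 4 * Fintype.card V * D := by
  have h1 := fD_triv G D
  have h2 : (Vcl G D).card ≤ Fintype.card V := Finset.card_le_univ _
  calc (Fp G D).card ≤ 2 * ((Vcl G D).card * (2 * D)) := h1
    _ ≤ 2 * (Fintype.card V * (2 * D)) := by
        exact Nat.mul_le_mul_left _ (Nat.mul_le_mul_right _ h2)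
    _ = 4 * Fintype.card V * D := by ring

private lemma masterD {α C : ℝ} (hα0 : 0 ≤ α) (hα1 : α ≤ 1) (hC1 : 1 ≤ C)
    (hcb : ∀ x y : V, G.Adj x y → (cFour G x y : ℝ)
      ≤ 6 * C * ((G.degree x + G.degree y : ℕ) : ℝ) ^ (2 - α))
    (hD : 1 ≤ D) :
    ((Fp G D).card : ℝ) ^ 3
      ≤ 10240 * C * (Fintype.card V : ℝ) ^ 2 * (G.edgeFinset.card : ℝ) ^ 2
        * (D : ℝ) ^ (-α) := by
  set f : ℝ := ((Fp G D).card : ℝ) with hf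
  set n : ℝ := (Fintype.card V : ℝ) with hn
  set m : ℝ := ((Vcl G D).card : ℝ) with hm
  set E : ℝ := (G.edgeFinset.card : ℝ) with hE
  have hfnn : 0 ≤ f := Nat.cast_nonneg _
  have hnnn : 0 ≤ n := Nat.cast_nonneg _
  have hmnn : 0 ≤ m := Nat.cast_nonneg _
  have hEnn : 0 ≤ E := Nat.cast_nonneg _
  clear_value f n m E
  have hDpos : (0 : ℝ) < (D : ℝ) := by exact_mod_cast hD
  have hC0 : (0 : ℝ) < C := lt_of_lt_of_le one_pos hC1
  set P : ℝ := ∑ x : V, ((tD G D x : ℝ)) ^ 2 with hP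
  set Q : ℝ := ∑ q ∈ (Vcl G D) ×ˢ (Vcl G D), ((cdD G D q.1 q.2 : ℝ)) ^ 2 with hQ
  set B : ℝ := ((4 * D : ℕ) : ℝ) ^ (2 - α) with hB
  have hPnn : 0 ≤ P := Finset.sum_nonneg fun x _ => sq_nonneg _
  have hQnn : 0 ≤ Q := Finset.sum_nonneg fun q _ => sq_nonneg _
  clear_value P Q B
  have hBpos : (0 : ℝ) < B := by
    rw [hB]
    apply Real.rpow_pos_of_pos
    have h : 0 < 4 * D := by omega
    exact_mod_cast h
  -- step 1 : f² ≤ 4 n P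
  have s1 : f ≤ 2 * ∑ x : V, (tD G D x : ℝ) := by
    have h := fD_le_two_sum_tD G D
    rw [hf]
    push_cast
    exact_mod_cast h
  have s2 : (∑ x : V, (tD G D x : ℝ)) ^ 2 ≤ n * P := by
    have h := sq_sum_le_card_mul_sum_sq (s := (univ : Finset V))
      (f := fun x => (tD G D x : ℝ))
    simpa [Finset.card_univ, ← hn, ← hP] using h
  have s3 : f ^ 2 ≤ 4 * (n * P) := by
    have hsumnn : 0 ≤ ∑ x : V, (tD G D x : ℝ) :=
      Finset.sum_nonneg fun x _ => Nat.cast_nonneg _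
    calc f ^ 2 ≤ (2 * ∑ x : V, (tD G D x : ℝ)) ^ 2 := pow_le_pow_left₀ hfnn s1 2
      _ = 4 * (∑ x : V, (tD G D x : ℝ)) ^ 2 := by ring
      _ ≤ 4 * (n * P) := by linarith
  -- step 2 : P² ≤ m² Q
  have s4 : P = ∑ q ∈ (Vcl G D) ×ˢ (Vcl G D), (cdD G D q.1 q.2 : ℝ) := by
    rw [hP]
    have h1 := bigT_card_fst G D
    have h2 := bigT_card_snd G D
    have h3 : (∑ x : V, (tD G D x) ^ 2 : ℕ)
        = ∑ q ∈ (Vcl G D) ×ˢ (Vcl G D), cdD G D q.1 q.2 := by rw [← h1, h2]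
    exact_mod_cast congrArg (Nat.cast : ℕ → ℝ) h3
  have s5 : P ^ 2 ≤ m ^ 2 * Q := by
    rw [s4]
    have h := sq_sum_le_card_mul_sum_sq (s := (Vcl G D) ×ˢ (Vcl G D))
      (f := fun q => (cdD G D q.1 q.2 : ℝ))
    rw [Finset.card_product] at h
    calc (∑ q ∈ (Vcl G D) ×ˢ (Vcl G D), (cdD G D q.1 q.2 : ℝ)) ^ 2
        ≤ (((Vcl G D).card * (Vcl G D).card : ℕ) : ℝ) * Q := by
          rw [hQ]; exact_mod_cast h
      _ = m ^ 2 * Q := by rw [hm]; push_cast; ring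
  -- step 3 : Q ≤ 10 C B f
  have s6 : Q = ((BigQ G D).card : ℝ) := by
    rw [hQ, bigQ_card G D]
    push_cast
    rfl
  have s7 : ((BigQ G D).card : ℕ)
      ≤ ((BigQ G D).filter fun z => z.1.1 ≠ z.1.2 ∧ z.2.1 ≠ z.2.2).card
        + 4 * D * (Fp G D).card := by
    have h1 := bigQ_cover G D
    have h2 := sdiag_card_le G D
    have h3 := (xdiag_card_le G D).trans (bigT_card_le G D)
    calc (BigQ G D).card ≤ _ := h1
      _ ≤ ((BigQ G D).filter fun z => z.1.1 ≠ z.1.2 ∧ z.2.1 ≠ z.2.2).card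
          + (2 * D * (Fp G D).card + 2 * D * (Fp G D).card) :=
        Nat.add_le_add_left (Nat.add_le_add h2 h3) _
      _ = ((BigQ G D).filter fun z => z.1.1 ≠ z.1.2 ∧ z.2.1 ≠ z.2.2).card
          + 4 * D * (Fp G D).card := by ring
  have s8 : (((BigQ G D).filter fun z => z.1.1 ≠ z.1.2 ∧ z.2.1 ≠ z.2.2).card : ℝ)
      ≤ 6 * C * B * f := by
    have h1 := ndist_card_le G D
    have h2 : ((∑ p ∈ Fp G D, cFour G p.1 p.2 : ℕ) : ℝ)
        ≤ ∑ p ∈ Fp G D, (6 * C * B) := by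
      push_cast
      refine Finset.sum_le_sum fun p hp => ?_
      simp only [Fp, Finset.mem_filter, Finset.mem_univ, true_and] at hp
      have hadj : G.Adj p.1 p.2 := hp.1
      refine (hcb p.1 p.2 hadj).trans ?_
      have hdeg : G.degree p.1 + G.degree p.2 ≤ 4 * D := by
        have ha := adjD_deg_lt G D hp
        have hb := adjD_deg_lt G D (adjD_symm G D hp)
        omega
      have hcast : ((G.degree p.1 + G.degree p.2 : ℕ) : ℝ) ≤ ((4 * D : ℕ) : ℝ) := by
        exact_mod_cast hdeg
      rw [hB]
      refine mul_le_mul_of_nonneg_left ?_ (by linarith)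
      exact Real.rpow_le_rpow (Nat.cast_nonneg _) hcast (by linarith)
    rw [Finset.sum_const, nsmul_eq_mul] at h2
    calc (((BigQ G D).filter fun z => z.1.1 ≠ z.1.2 ∧ z.2.1 ≠ z.2.2).card : ℝ)
        ≤ ((∑ p ∈ Fp G D, cFour G p.1 p.2 : ℕ) : ℝ) := by exact_mod_cast h1
      _ ≤ ((Fp G D).card : ℝ) * (6 * C * B) := h2
      _ = 6 * C * B * f := by rw [hf]; ring
  have s9 : (4 : ℝ) * D * f ≤ 4 * C * B * f := by
    have h1 : ((4 * D : ℕ) : ℝ) ≤ B := by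
      rw [hB]
      nth_rewrite 1 [← Real.rpow_one ((4 * D : ℕ) : ℝ)]
      refine Real.rpow_le_rpow_of_exponent_le ?_ (by linarith)
      have h : 1 ≤ 4 * D := by omega
      exact_mod_cast h
    have h2 : (4 : ℝ) * D ≤ C * B := by
      calc (4 : ℝ) * D = ((4 * D : ℕ) : ℝ) := by push_cast; ring
        _ ≤ B := h1
        _ = 1 * B := (one_mul B).symm
        _ ≤ C * B := mul_le_mul_of_nonneg_right hC1 hBpos.le
    have h3 : C * B * f ≤ 4 * C * B * f := by
      have h4 : 0 ≤ C * B * f := mul_nonneg (mul_nonneg hC0.le hBpos.le) hfnn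
      linarith
    exact (mul_le_mul_of_nonneg_right h2 hfnn).trans h3
  have s10 : Q ≤ 10 * C * B * f := by
    rw [s6]
    have hc : ((BigQ G D).card : ℝ)
        ≤ (((BigQ G D).filter fun z => z.1.1 ≠ z.1.2 ∧ z.2.1 ≠ z.2.2).card : ℝ)
          + 4 * D * f := by
      rw [hf]
      exact_mod_cast s7
    calc ((BigQ G D).card : ℝ) ≤ _ := hc
      _ ≤ 6 * C * B * f + 4 * C * B * f := add_le_add s8 s9
      _ = 10 * C * B * f := by ring
  -- combine : f⁴ ≤ 160 C n² m² B f
  have s11 : f ^ 4 ≤ 160 * C * n ^ 2 * m ^ 2 * B * f := by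
    calc f ^ 4 = (f ^ 2) ^ 2 := by ring
      _ ≤ (4 * (n * P)) ^ 2 := pow_le_pow_left₀ (sq_nonneg f) s3 2
      _ = 16 * n ^ 2 * P ^ 2 := by ring
      _ ≤ 16 * n ^ 2 * (m ^ 2 * Q) := by
          refine mul_le_mul_of_nonneg_left s5 ?_
          have := sq_nonneg n
          linarith
      _ ≤ 16 * n ^ 2 * (m ^ 2 * (10 * C * B * f)) := by
          refine mul_le_mul_of_nonneg_left
            (mul_le_mul_of_nonneg_left s10 (sq_nonneg m)) ?_
          have := sq_nonneg n
          linarith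
      _ = 160 * C * n ^ 2 * m ^ 2 * B * f := by ring
  have s12 : f ^ 3 ≤ 160 * C * n ^ 2 * m ^ 2 * B := by
    have hrhs : 0 ≤ 160 * C * n ^ 2 * m ^ 2 * B :=
      mul_nonneg (mul_nonneg (mul_nonneg (by linarith) (sq_nonneg n)) (sq_nonneg m))
        hBpos.le
    rcases eq_or_lt_of_le hfnn with h | h
    · calc f ^ 3 = f ^ 2 * f := by ring
        _ = f ^ 2 * 0 := by rw [← h]
        _ = 0 := by ring
        _ ≤ _ := hrhs
    · have h5 := s11
      have h4 : f ^ 4 = f ^ 3 * f := by ring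
      rw [h4] at h5
      exact le_of_mul_le_mul_right (by linarith) h
  -- plug in  m·D ≤ 2E  and  B ≤ 16 D² D^{-α}
  have s13 : m * (D : ℝ) ≤ 2 * E := by
    have h := vcl_card_le G D
    rw [hm, hE]
    calc ((Vcl G D).card : ℝ) * (D : ℝ) = ((D * (Vcl G D).card : ℕ) : ℝ) := by
          push_cast; ring
      _ ≤ ((2 * G.edgeFinset.card : ℕ) : ℝ) := by exact_mod_cast h
      _ = 2 * (G.edgeFinset.card : ℝ) := by push_cast; rfl
  have s14 : B ≤ 16 * (D : ℝ) ^ 2 * (D : ℝ) ^ (-α) := by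
    rw [hB]
    have h1 : ((4 * D : ℕ) : ℝ) = 4 * (D : ℝ) := by push_cast; ring
    rw [h1, Real.mul_rpow (by norm_num) hDpos.le]
    have h2 : (4 : ℝ) ^ (2 - α) ≤ 16 := by
      calc (4 : ℝ) ^ (2 - α) ≤ 4 ^ (2 : ℝ) :=
            Real.rpow_le_rpow_of_exponent_le (by norm_num) (by linarith)
        _ = 16 := by
            rw [show (2 : ℝ) = ((2 : ℕ) : ℝ) by norm_num, Real.rpow_natCast]
            norm_num
    have h3 : (D : ℝ) ^ (2 - α) = (D : ℝ) ^ 2 * (D : ℝ) ^ (-α) := by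
      rw [show (2 - α) = 2 + (-α) by ring, Real.rpow_add hDpos,
        show ((2 : ℝ)) = ((2 : ℕ) : ℝ) by norm_num, Real.rpow_natCast]
    rw [h3]
    have h4 : 0 ≤ (D : ℝ) ^ 2 * (D : ℝ) ^ (-α) := by positivity
    nlinarith [Real.rpow_nonneg hDpos.le (2 - α)]
  have hDa : (0 : ℝ) ≤ (D : ℝ) ^ (-α) := Real.rpow_nonneg hDpos.le _
  have hfac : (0 : ℝ) ≤ 160 * C * n ^ 2 * m ^ 2 :=
    mul_nonneg (mul_nonneg (by linarith) (sq_nonneg n)) (sq_nonneg m)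
  calc f ^ 3 ≤ 160 * C * n ^ 2 * m ^ 2 * B := s12
    _ ≤ 160 * C * n ^ 2 * m ^ 2 * (16 * (D : ℝ) ^ 2 * (D : ℝ) ^ (-α)) :=
        mul_le_mul_of_nonneg_left s14 hfac
    _ = 2560 * C * n ^ 2 * (D : ℝ) ^ (-α) * ((m * (D : ℝ)) ^ 2) := by ring
    _ ≤ 2560 * C * n ^ 2 * (D : ℝ) ^ (-α) * ((2 * E) ^ 2) := by
        have hsq : (m * (D : ℝ)) ^ 2 ≤ (2 * E) ^ 2 :=
          pow_le_pow_left₀ (mul_nonneg hmnn hDpos.le) s13 2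
        have h2560 : (0 : ℝ) ≤ 2560 * C := by linarith
        have hfac2 : (0 : ℝ) ≤ 2560 * C * n ^ 2 * (D : ℝ) ^ (-α) :=
          mul_nonneg (mul_nonneg h2560 (sq_nonneg n)) hDa
        exact mul_le_mul_of_nonneg_left hsq hfac2
    _ = 10240 * C * n ^ 2 * E ^ 2 * (D : ℝ) ^ (-α) := by ring

private lemma AP_card : ((univ : Finset (V × V)).filter fun p => G.Adj p.1 p.2).card
    = 2 * G.edgeFinset.card := by
  rw [card_filter_fst (fun x y => G.Adj x y)]
  have h1 : ∀ x : V, (univ.filter fun y => G.Adj x y).card = G.degree x := by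
    intro x
    rw [← G.card_neighborFinset_eq_degree]
    congr 1
    ext y
    simp [SimpleGraph.mem_neighborFinset]
  simp_rw [h1]
  exact G.sum_degrees_eq_twice_card_edges

private lemma edge_partition :
    2 * G.edgeFinset.card
      = ∑ j ∈ Finset.range (Nat.log 2 (Fintype.card V) + 1), (Fp G (2 ^ j)).card := by
  rw [← AP_card G]
  rw [Finset.card_eq_sum_card_fiberwise
    (f := fun p => Nat.log 2 (max (G.degree p.1) (G.degree p.2)))
    (t := Finset.range (Nat.log 2 (Fintype.card V) + 1)) ?_]
  · refine Finset.sum_congr rfl fun j _ => ?_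
    congr 1
    ext p
    simp only [Finset.mem_filter, Finset.mem_univ, true_and, Fp]
    constructor
    · rintro ⟨hadj, hlog⟩
      have hM1 : 1 ≤ max (G.degree p.1) (G.degree p.2) := by
        have : 0 < G.degree p.1 := by
          rw [← G.card_neighborFinset_eq_degree, Finset.card_pos]
          exact ⟨p.2, (SimpleGraph.mem_neighborFinset G p.1 p.2).mpr hadj⟩
        omega
      have hle : 2 ^ j ≤ max (G.degree p.1) (G.degree p.2) := by
        rw [← hlog]
        exact Nat.pow_log_le_self 2 (by omega)
      have hlt : max (G.degree p.1) (G.degree p.2) < 2 * 2 ^ j := by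
        have := Nat.lt_pow_succ_log_self (by norm_num : 1 < 2)
          (max (G.degree p.1) (G.degree p.2))
        rw [hlog] at this
        calc max (G.degree p.1) (G.degree p.2) < 2 ^ (j + 1) := this
          _ = 2 * 2 ^ j := by rw [pow_succ]; ring
      exact ⟨hadj, hle, hlt⟩
    · rintro ⟨hadj, hle, hlt⟩
      refine ⟨hadj, Nat.log_eq_of_pow_le_of_lt_pow hle ?_⟩
      calc max (G.degree p.1) (G.degree p.2) < 2 * 2 ^ j := hlt
        _ = 2 ^ (j + 1) := by rw [pow_succ]; ring
  · intro p hp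
    simp only [Finset.mem_coe, Finset.mem_range]
    have h1 : max (G.degree p.1) (G.degree p.2) ≤ Fintype.card V := by
      have ha : G.degree p.1 ≤ Fintype.card V := by
        rw [← G.card_neighborFinset_eq_degree]
        exact Finset.card_le_univ _
      have hb : G.degree p.2 ≤ Fintype.card V := by
        rw [← G.card_neighborFinset_eq_degree]
        exact Finset.card_le_univ _
      omega
    have := Nat.log_mono_right (b := 2) h1
    omega

end dc

set_option maxHeartbeats 1000000 in
theorem stmt1 (α C : ℝ) (hα0 : 0 ≤ α) (hα1 : α ≤ 1) (hC : 0 < C) :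
    ∃ C' : ℝ, 0 < C' ∧
      ∀ (V : Type) [Fintype V] (G : SimpleGraph V),
        (∀ u v : V, G.Adj u v → ∀ U W : Set V,
            U ⊆ G.neighborSet u \ {v} → W ⊆ G.neighborSet v \ {u} → Disjoint U W →
            (edgesBetween G U W : ℝ) ≤ C * ((U.ncard + W.ncard : ℕ) : ℝ) ^ (2 - α)) →
        (G.edgeSet.ncard : ℝ) ≤ C' * (Fintype.card V : ℝ) ^ (2 - α / (α + 1)) := by
  rcases eq_or_lt_of_le hα0 with hα | hαpos
  · -- trivial case α = 0
    refine ⟨1, one_pos, ?_⟩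
    intro V _ G _
    classical
    letI : DecidableRel G.Adj := Classical.decRel _
    have hexp : 2 - α / (α + 1) = 2 := by rw [← hα]; norm_num
    rw [hexp, one_mul]
    have hE : G.edgeSet.ncard = G.edgeFinset.card := by
      rw [← SimpleGraph.coe_edgeFinset, Set.ncard_coe_finset]
    have h2E : 2 * G.edgeFinset.card = ∑ v : V, G.degree v :=
      G.sum_degrees_eq_twice_card_edges.symm
    have hdeg : ∀ v : V, G.degree v ≤ Fintype.card V := fun v => by
      rw [← G.card_neighborFinset_eq_degree]
      exact Finset.card_le_univ _
    have hsum : ∑ v : V, G.degree v ≤ Fintype.card V * Fintype.card V := by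
      calc ∑ v : V, G.degree v ≤ ∑ _v : V, Fintype.card V :=
            Finset.sum_le_sum fun v _ => hdeg v
        _ = Fintype.card V * Fintype.card V := by
            rw [Finset.sum_const, smul_eq_mul, Finset.card_univ]
    have hfin : G.edgeFinset.card ≤ Fintype.card V * Fintype.card V := by omega
    rw [hE]
    calc (G.edgeFinset.card : ℝ) ≤ ((Fintype.card V * Fintype.card V : ℕ) : ℝ) := by
          exact_mod_cast hfin
      _ = (Fintype.card V : ℝ) ^ (2 : ℝ) := by
          rw [show (2:ℝ) = ((2:ℕ):ℝ) by norm_num, Real.rpow_natCast]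
          push_cast
          ring
  · -- main case 0 < α
    have h2a : 1 ≤ 2 - α := by linarith
    set C₁ : ℝ := max C 1 with hC₁def
    have hC₁1 : 1 ≤ C₁ := le_max_right _ _
    have hC₁0 : (0:ℝ) < C₁ := by linarith
    set r : ℝ := (2:ℝ) ^ (-(α/3)) with hrdef
    have hr0 : 0 ≤ r := Real.rpow_nonneg (by norm_num) _
    have hr1 : r < 1 := Real.rpow_lt_one_of_one_lt_of_neg (by norm_num) (by linarith)
    set s : ℝ := (1 - r)⁻¹ with hsdef
    have hs0 : 0 < s := inv_pos.mpr (by linarith)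
    set K : ℝ := (10240 * C₁) ^ ((1:ℝ)/3) with hKdef
    have hK0 : 0 < K := Real.rpow_pos_of_pos (by linarith) _
    have hX0 : 0 < K * s := mul_pos hK0 hs0
    refine ⟨max 32 (8 * (K * s)^3), lt_of_lt_of_le (by norm_num) (le_max_left _ _), ?_⟩
    intro V _ G hyp
    classical
    letI : DecidableRel G.Adj := Classical.decRel _
    set γ : ℝ := 2 - α / (α + 1) with hγdef
    have ha1 : (0:ℝ) < α + 1 := by linarith
    have hγ1 : 1 ≤ γ := by
      rw [hγdef]
      have : α / (α + 1) ≤ 1 := (div_le_one ha1).mpr (by linarith)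
      linarith
    have hEncard : (G.edgeSet.ncard : ℝ) = (G.edgeFinset.card : ℝ) := by
      rw [← SimpleGraph.coe_edgeFinset, Set.ncard_coe_finset]
    rw [hEncard]
    set n : ℝ := (Fintype.card V : ℝ) with hndef
    set EE : ℝ := (G.edgeFinset.card : ℝ) with hEEdef
    have hEE0 : 0 ≤ EE := Nat.cast_nonneg _
    clear_value n EE
    by_cases hn0 : Fintype.card V = 0
    · -- no vertices : no edges
      have hE0 : G.edgeFinset.card = 0 := by
        have h2E := G.sum_degrees_eq_twice_card_edges
        have hu : (univ : Finset V) = ∅ := by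
          rw [← Finset.card_eq_zero, Finset.card_univ]
          exact hn0
        rw [hu, Finset.sum_empty] at h2E
        omega
      rw [hEEdef, hE0]
      simp only [Nat.cast_zero]
      have hmax0 : (0:ℝ) ≤ max 32 (8*(K*s)^3) :=
        le_trans (by norm_num) (le_max_left _ _)
      have hnn0 : (0:ℝ) ≤ n := by rw [hndef]; exact Nat.cast_nonneg _
      exact mul_nonneg hmax0 (Real.rpow_nonneg hnn0 _)
    · have hn1 : 1 ≤ Fintype.card V := Nat.one_le_iff_ne_zero.mpr hn0
      have hn1' : (1:ℝ) ≤ n := by rw [hndef]; exact_mod_cast hn1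
      have hnpos : (0:ℝ) < n := by linarith
      -- upgraded hypothesis with constant C₁
      have hyp₁ : ∀ u v : V, G.Adj u v → ∀ U W : Set V,
          U ⊆ G.neighborSet u \ {v} → W ⊆ G.neighborSet v \ {u} → Disjoint U W →
          (edgesBetween G U W : ℝ) ≤ C₁ * ((U.ncard + W.ncard : ℕ) : ℝ) ^ (2 - α) := by
        intro u v huv U W hU hW hUW
        refine (hyp u v huv U W hU hW hUW).trans ?_
        exact mul_le_mul_of_nonneg_right (le_max_left _ _)
          (Real.rpow_nonneg (Nat.cast_nonneg _) _)
      have hcb : ∀ x y : V, G.Adj x y → (cFour G x y : ℝ)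
          ≤ 6 * C₁ * ((G.degree x + G.degree y : ℕ) : ℝ) ^ (2 - α) := by
        intro x y hxy
        rw [cFour]
        exact claimB G h2a hC₁0 hyp₁ x y hxy
      -- cube-root helpers
      have hcube : ∀ y : ℝ, 0 ≤ y → (y ^ ((1:ℝ)/3)) ^ (3:ℕ) = y := by
        intro y hy
        rw [← Real.rpow_natCast (y ^ ((1:ℝ)/3)) 3, ← Real.rpow_mul hy]
        norm_num
      -- per-scale bound
      set b : ℝ := K * (n ^ (2:ℕ) * EE ^ (2:ℕ)) ^ ((1:ℝ)/3) with hbdef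
      have hbn0 : 0 ≤ b := by
        refine mul_nonneg hK0.le (Real.rpow_nonneg ?_ _)
        positivity
      have hrj : ∀ j : ℕ, (r ^ j) ^ (3:ℕ) = ((2:ℝ) ^ j) ^ (-α) := by
        intro j
        rw [hrdef, ← Real.rpow_natCast ((2:ℝ) ^ (-(α/3))) j,
          ← Real.rpow_mul (by norm_num : (0:ℝ) ≤ 2),
          ← Real.rpow_natCast ((2:ℝ) ^ (-(α/3) * (j:ℝ))) 3,
          ← Real.rpow_mul (by norm_num : (0:ℝ) ≤ 2),
          ← Real.rpow_natCast (2:ℝ) j,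
          ← Real.rpow_mul (by norm_num : (0:ℝ) ≤ 2)]
        congr 1
        ring
      have hbound : ∀ j : ℕ, ((Fp G (2 ^ j)).card : ℝ) ≤ b * r ^ j := by
        intro j
        have hD1 : 1 ≤ 2 ^ j := Nat.one_le_two_pow
        have hm := masterD G (2 ^ j) hα0 hα1 hC₁1 hcb hD1
        have hc2 : ((2 ^ j : ℕ) : ℝ) = (2:ℝ) ^ j := by push_cast; rfl
        rw [hc2, ← hndef, ← hEEdef] at hm
        refine le_of_pow_le_pow_left₀ (by norm_num : (3:ℕ) ≠ 0)
          (mul_nonneg hbn0 (pow_nonneg hr0 _)) ?_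
        have hb3 : (b * r ^ j) ^ (3:ℕ)
            = 10240 * C₁ * n ^ 2 * EE ^ 2 * ((2:ℝ) ^ j) ^ (-α) := by
          rw [mul_pow, hbdef, mul_pow, hcube (10240 * C₁) (by linarith),
            hcube (n ^ (2:ℕ) * EE ^ (2:ℕ)) (by positivity), hrj j]
          ring
        rw [hb3]
        exact hm
      have htriv : ∀ j : ℕ, ((Fp G (2 ^ j)).card : ℝ) ≤ 4 * n * (2:ℝ) ^ j := by
        intro j
        have h := fD_triv' G (2 ^ j)
        calc ((Fp G (2 ^ j)).card : ℝ)
            ≤ ((4 * Fintype.card V * 2 ^ j : ℕ) : ℝ) := by exact_mod_cast h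
          _ = 4 * n * (2:ℝ) ^ j := by rw [hndef]; push_cast; ring
      -- choice of the cut point j₀
      set x : ℝ := n ^ ((1:ℝ)/(α+1)) with hxdef
      have hx1 : 1 ≤ x := by
        calc (1:ℝ) = (1:ℝ) ^ ((1:ℝ)/(α+1)) := (Real.one_rpow _).symm
          _ ≤ n ^ ((1:ℝ)/(α+1)) := Real.rpow_le_rpow (by norm_num) hn1'
              (div_nonneg zero_le_one ha1.le)
      have hxpos : 0 < x := by linarith
      set m0 : ℕ := ⌈x⌉₊ with hm0def
      have hm0_1 : 1 ≤ m0 := Nat.one_le_iff_ne_zero.mpr (by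
        have : 0 < m0 := Nat.ceil_pos.mpr hxpos
        omega)
      set j₀ : ℕ := Nat.clog 2 m0 with hj₀def
      have h2j₀_ge : x ≤ (2:ℝ) ^ j₀ := by
        have h := Nat.le_pow_clog (by norm_num : 1 < 2) m0
        calc x ≤ (m0 : ℝ) := Nat.le_ceil x
          _ ≤ ((2 ^ j₀ : ℕ) : ℝ) := by exact_mod_cast h
          _ = (2:ℝ) ^ j₀ := by push_cast; rfl
      have h2j₀_le : (2:ℝ) ^ j₀ ≤ 4 * x := by
        have hnat : 2 ^ j₀ ≤ 2 * m0 := by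
          rcases eq_or_lt_of_le hm0_1 with h1 | h1
          · have : j₀ = 0 := by rw [hj₀def, ← h1, Nat.clog_one_right]
            rw [this]
            omega
          · have hlt := Nat.pow_pred_clog_lt_self (by norm_num : 1 < 2) h1
            have hj₀pos : 0 < j₀ := Nat.clog_pos (by norm_num) h1
            have hexp : 2 ^ j₀ = 2 * 2 ^ (j₀ - 1) := by
              conv_lhs => rw [← Nat.sub_add_cancel hj₀pos]
              rw [pow_succ]
              ring
            have hle : 2 ^ (j₀ - 1) ≤ m0 := by
              have : (Nat.clog 2 m0).pred = j₀ - 1 := by rw [hj₀def]; rfl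
              rw [this] at hlt
              omega
            omega
        calc (2:ℝ) ^ j₀ = ((2 ^ j₀ : ℕ) : ℝ) := by push_cast; rfl
          _ ≤ ((2 * m0 : ℕ) : ℝ) := by exact_mod_cast hnat
          _ = 2 * (m0 : ℝ) := by push_cast; rfl
          _ ≤ 2 * (x + 1) := by
              have := Nat.ceil_lt_add_one hxpos.le
              rw [hm0def]
              linarith
          _ ≤ 4 * x := by linarith
      -- the partition identity and the two partial sums
      have hpartN := edge_partition G
      have hpart : 2 * EE
          = ∑ j ∈ Finset.range (Nat.log 2 (Fintype.card V) + 1),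
              ((Fp G (2 ^ j)).card : ℝ) := by
        rw [hEEdef]
        calc 2 * (G.edgeFinset.card : ℝ)
            = ((2 * G.edgeFinset.card : ℕ) : ℝ) := by push_cast; ring
          _ = ((∑ j ∈ Finset.range (Nat.log 2 (Fintype.card V) + 1),
                (Fp G (2 ^ j)).card : ℕ) : ℝ) := by rw [hpartN]
          _ = _ := by push_cast; rfl
      set L : ℕ := Nat.log 2 (Fintype.card V) + 1 with hLdef
      have hsplit : ∑ j ∈ Finset.range L, ((Fp G (2 ^ j)).card : ℝ)
          = ∑ j ∈ (Finset.range L).filter (fun j => j < j₀), ((Fp G (2 ^ j)).card : ℝ)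
            + ∑ j ∈ (Finset.range L).filter (fun j => ¬ j < j₀),
                ((Fp G (2 ^ j)).card : ℝ) :=
        (Finset.sum_filter_add_sum_filter_not _ _ _).symm
      have hpart1 : ∑ j ∈ (Finset.range L).filter (fun j => j < j₀),
          ((Fp G (2 ^ j)).card : ℝ) ≤ 4 * n * (2:ℝ) ^ j₀ := by
        calc ∑ j ∈ (Finset.range L).filter (fun j => j < j₀), ((Fp G (2 ^ j)).card : ℝ)
            ≤ ∑ j ∈ (Finset.range L).filter (fun j => j < j₀), 4 * n * (2:ℝ) ^ j :=
              Finset.sum_le_sum fun j _ => htriv j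
          _ ≤ ∑ j ∈ Finset.range j₀, 4 * n * (2:ℝ) ^ j := by
              refine Finset.sum_le_sum_of_subset_of_nonneg ?_ ?_
              · intro j hj
                simp only [Finset.mem_filter, Finset.mem_range] at hj ⊢
                exact hj.2
              · intro j _ _
                have h2jnn : (0:ℝ) ≤ (2:ℝ) ^ j := by positivity
                have : (0:ℝ) ≤ 4 * n := by linarith
                exact mul_nonneg this h2jnn
          _ = 4 * n * ∑ j ∈ Finset.range j₀, (2:ℝ) ^ j := by rw [Finset.mul_sum]
          _ ≤ 4 * n * (2:ℝ) ^ j₀ := by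
              refine mul_le_mul_of_nonneg_left ?_ (by linarith)
              rw [geom_sum_eq (by norm_num : (2:ℝ) ≠ 1) j₀]
              have : (0:ℝ) ≤ 2 ^ j₀ := by positivity
              rw [div_le_iff₀ (by norm_num : (0:ℝ) < 2 - 1)]
              linarith
      have hgeom : ∀ M : ℕ, ∑ i ∈ Finset.range M, r ^ i ≤ s := by
        intro M
        have hpow : 0 ≤ r ^ M := pow_nonneg hr0 M
        have h1r : 0 < 1 - r := by linarith
        rw [geom_sum_eq (ne_of_lt hr1) M, hsdef]
        have key : (r ^ M - 1) / (r - 1) = (1 - r ^ M) / (1 - r) := by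
          rw [div_eq_div_iff (by linarith : r - 1 ≠ 0) h1r.ne']
          ring
        rw [key, ← one_div]
        rw [div_le_div_iff₀ h1r h1r]
        nlinarith
      have hpart2 : ∑ j ∈ (Finset.range L).filter (fun j => ¬ j < j₀),
          ((Fp G (2 ^ j)).card : ℝ) ≤ b * r ^ j₀ * s := by
        have hIco : (Finset.range L).filter (fun j => ¬ j < j₀) = Finset.Ico j₀ L := by
          ext j
          simp only [Finset.mem_filter, Finset.mem_range, Finset.mem_Ico, Nat.not_lt]
          tauto
        calc ∑ j ∈ (Finset.range L).filter (fun j => ¬ j < j₀), ((Fp G (2 ^ j)).card : ℝ)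
            ≤ ∑ j ∈ (Finset.range L).filter (fun j => ¬ j < j₀), b * r ^ j :=
              Finset.sum_le_sum fun j _ => hbound j
          _ = ∑ j ∈ Finset.Ico j₀ L, b * r ^ j := by rw [hIco]
          _ = ∑ i ∈ Finset.range (L - j₀), b * r ^ (j₀ + i) :=
              Finset.sum_Ico_eq_sum_range _ _ _
          _ = b * r ^ j₀ * ∑ i ∈ Finset.range (L - j₀), r ^ i := by
              rw [Finset.mul_sum]
              refine Finset.sum_congr rfl fun i _ => ?_
              rw [pow_add]
              ring
          _ ≤ b * r ^ j₀ * s := by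
              refine mul_le_mul_of_nonneg_left (hgeom _) ?_
              exact mul_nonneg hbn0 (pow_nonneg hr0 _)
      -- put the two parts together
      have hmain : 2 * EE ≤ 16 * (n * x) + b * x ^ (-(α/3)) * s := by
        have hrj₀ : r ^ j₀ ≤ x ^ (-(α/3)) := by
          have h1 : r ^ j₀ = ((2:ℝ) ^ j₀) ^ (-(α/3)) := by
            rw [hrdef, ← Real.rpow_natCast ((2:ℝ) ^ (-(α/3))) j₀,
              ← Real.rpow_mul (by norm_num : (0:ℝ) ≤ 2),
              ← Real.rpow_natCast (2:ℝ) j₀,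
              ← Real.rpow_mul (by norm_num : (0:ℝ) ≤ 2)]
            congr 1
            ring
          rw [h1]
          exact Real.rpow_le_rpow_of_nonpos hxpos h2j₀_ge (by linarith)
        have hp1 : 4 * n * (2:ℝ) ^ j₀ ≤ 16 * (n * x) := by
          calc 4 * n * (2:ℝ) ^ j₀ ≤ 4 * n * (4 * x) := by
                refine mul_le_mul_of_nonneg_left h2j₀_le (by linarith)
            _ = 16 * (n * x) := by ring
        have hp2 : b * r ^ j₀ * s ≤ b * x ^ (-(α/3)) * s := by
          refine mul_le_mul_of_nonneg_right (mul_le_mul_of_nonneg_left hrj₀ hbn0) hs0.le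
        calc 2 * EE = _ := hpart
          _ = _ := hsplit
          _ ≤ 4 * n * (2:ℝ) ^ j₀ + b * r ^ j₀ * s := add_le_add hpart1 hpart2
          _ ≤ 16 * (n * x) + b * x ^ (-(α/3)) * s := add_le_add hp1 hp2
      -- rewrite in terms of T = n^γ
      set T : ℝ := n ^ γ with hTdef
      have hT1 : 1 ≤ T := by
        calc (1:ℝ) = (1:ℝ) ^ γ := (Real.one_rpow _).symm
          _ ≤ n ^ γ := Real.rpow_le_rpow (by norm_num) hn1' (by linarith)
      have hnx : n * x = T := by
        have hγeq : γ = 1 + 1/(α+1) := by rw [hγdef]; field_simp; ring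
        rw [hxdef, hTdef, hγeq, Real.rpow_add hnpos, Real.rpow_one]
      have hbx : b * x ^ (-(α/3)) = K * (T ^ ((1:ℝ)/3) * EE ^ ((2:ℝ)/3)) := by
        have hsplit2 : (n ^ (2:ℕ) * EE ^ (2:ℕ)) ^ ((1:ℝ)/3)
            = n ^ ((2:ℝ)/3) * EE ^ ((2:ℝ)/3) := by
          rw [Real.mul_rpow (by positivity) (by positivity),
            ← Real.rpow_natCast n 2, ← Real.rpow_natCast EE 2,
            ← Real.rpow_mul hnpos.le, ← Real.rpow_mul hEE0]
          norm_num
        have hxterm : x ^ (-(α/3)) = n ^ ((1/(α+1)) * (-(α/3))) := by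
          rw [hxdef, ← Real.rpow_mul hnpos.le]
        have hT13 : n ^ ((2:ℝ)/3) * n ^ ((1/(α+1)) * (-(α/3))) = T ^ ((1:ℝ)/3) := by
          rw [← Real.rpow_add hnpos, hTdef, ← Real.rpow_mul hnpos.le]
          congr 1
          rw [hγdef]
          field_simp
          ring
        calc b * x ^ (-(α/3))
            = K * (n ^ ((2:ℝ)/3) * EE ^ ((2:ℝ)/3)) * (n ^ ((1/(α+1)) * (-(α/3)))) := by
              rw [hbdef, hsplit2, hxterm]
          _ = K * ((n ^ ((2:ℝ)/3) * n ^ ((1/(α+1)) * (-(α/3)))) * EE ^ ((2:ℝ)/3)) := by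
              ring
          _ = K * (T ^ ((1:ℝ)/3) * EE ^ ((2:ℝ)/3)) := by rw [hT13]
      have hfinal : EE ≤ 16 * T + (K * s) * (T ^ ((1:ℝ)/3) * EE ^ ((2:ℝ)/3)) := by
        have h1 : b * x ^ (-(α/3)) * s ≤ (K * s) * (T ^ ((1:ℝ)/3) * EE ^ ((2:ℝ)/3)) := by
          rw [hbx]
          exact le_of_eq (by ring)
        have h2 : 2 * EE ≤ 16 * T + (K * s) * (T ^ ((1:ℝ)/3) * EE ^ ((2:ℝ)/3)) := by
          calc 2 * EE ≤ 16 * (n * x) + b * x ^ (-(α/3)) * s := hmain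
            _ ≤ 16 * (n * x) + (K * s) * (T ^ ((1:ℝ)/3) * EE ^ ((2:ℝ)/3)) :=
                add_le_add_right h1 _
            _ = 16 * T + (K * s) * (T ^ ((1:ℝ)/3) * EE ^ ((2:ℝ)/3)) := by rw [hnx]
        have hQnn : 0 ≤ (K * s) * (T ^ ((1:ℝ)/3) * EE ^ ((2:ℝ)/3)) :=
          mul_nonneg hX0.le (mul_nonneg
            (Real.rpow_nonneg (le_trans zero_le_one hT1) _)
            (Real.rpow_nonneg hEE0 _))
        linarith
      -- endgame
      clear hbound htriv hpart hsplit hpart1 hpart2 hpartN hmain hgeom hbx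
        hyp hyp₁ hcb hEncard hnx h2j₀_ge h2j₀_le
      clear_value T
      by_cases hcase : EE ≤ 32 * T
      · calc EE ≤ 32 * T := hcase
          _ ≤ max 32 (8 * (K * s)^3) * T :=
            mul_le_mul_of_nonneg_right (le_max_left _ _) (by linarith)
      · push_neg at hcase
        have h32 : (32:ℝ) ≤ 32 * T := by linarith
        have hEEpos : 0 < EE := by linarith
        have hhalf : EE / 2 ≤ (K * s) * (T ^ ((1:ℝ)/3) * EE ^ ((2:ℝ)/3)) := by
          linarith
        have hc3 : (EE / 2) ^ (3:ℕ)
            ≤ ((K * s) * (T ^ ((1:ℝ)/3) * EE ^ ((2:ℝ)/3))) ^ (3:ℕ) := by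
          refine pow_le_pow_left₀ (by linarith) hhalf 3
        have hT3 : (T ^ ((1:ℝ)/3)) ^ (3:ℕ) = T := hcube T (by linarith)
        have hE3 : (EE ^ ((2:ℝ)/3)) ^ (3:ℕ) = EE ^ (2:ℕ) := by
          rw [← Real.rpow_natCast (EE ^ ((2:ℝ)/3)) 3, ← Real.rpow_mul hEE0]
          rw [show ((2:ℝ)/3) * ((3:ℕ):ℝ) = ((2:ℕ):ℝ) by push_cast; ring,
            Real.rpow_natCast]
        have hcubed : EE ^ (3:ℕ) / 8 ≤ 8 * (K * s)^3 * T * EE ^ (2:ℕ) / 8 := by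
          have hrhs : ((K * s) * (T ^ ((1:ℝ)/3) * EE ^ ((2:ℝ)/3))) ^ (3:ℕ)
              = (K * s)^3 * (T * EE ^ (2:ℕ)) := by
            rw [mul_pow, mul_pow, mul_pow, hT3, hE3]
          have h5 : (EE / 2) ^ (3:ℕ) = EE ^ (3:ℕ) / 8 := by ring
          rw [h5, hrhs] at hc3
          nlinarith [hc3]
        have hfin2 : EE ≤ 8 * (K * s)^3 * T := by
          have hEE2pos : 0 < EE ^ (2:ℕ) := pow_pos hEEpos 2
          have h6 : EE * EE ^ (2:ℕ) ≤ (8 * (K * s)^3 * T) * EE ^ (2:ℕ) := by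
            nlinarith [hcubed]
          exact le_of_mul_le_mul_right h6 hEE2pos
        calc EE ≤ 8 * (K * s)^3 * T := hfin2
          _ ≤ max 32 (8 * (K * s)^3) * T :=
            mul_le_mul_of_nonneg_right (le_max_right _ _) (by linarith)
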